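/- Let A ⊆ D, n ∈ ℕ, κ ∈ (0, 1/2), and let H ⊆ G_n(A) be a non-empty finite collection of pairwise disjoint dyadic intervals such that, with A∞ = limsup(A), one has |H* ∩ A∞| > (1−κ)|H*|. Then for any signs ε̄ ∈ {−1,1}^H, each of the sets C = H*_{ε̄} and C = H*_{−ε̄} satisfies |H*|/2 ≥ |C ∩ A∞| > (1−2κ)|C| = (1−2κ)|H*|/2. -/

import Mathlib

open MeasureTheory Set

/-- Index set for dyadic intervals: `(j, i)` with `1 ≤ i ≤ 2^j` encodes
`[(i-1)/2^j, i/2^j) ⊆ [0,1)`. -/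
def DIdx : Set (ℕ × ℕ) := {p | 1 ≤ p.2 ∧ p.2 ≤ 2 ^ p.1}

/-- The dyadic interval `[(i-1)/2^j, i/2^j)` encoded by `p = (j, i)`. -/
def dIco (p : ℕ × ℕ) : Set ℝ :=
  Set.Ico (((p.2 : ℝ) - 1) / 2 ^ p.1) ((p.2 : ℝ) / 2 ^ p.1)

/-- Maximal elements (with respect to inclusion of the associated intervals)
of a collection of dyadic intervals. -/
def maxElems (A : Set (ℕ × ℕ)) : Set (ℕ × ℕ) :=
  {I | I ∈ A ∧ ∀ J ∈ A, dIco I ⊆ dIco J → I = J}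

/-- Auxiliary recursion: the `n`-th generation and the remainder after removing
generations `0, …, n`. -/
def genAux (A : Set (ℕ × ℕ)) : ℕ → Set (ℕ × ℕ) × Set (ℕ × ℕ)
  | 0 => (maxElems A, A \ maxElems A)
  | n + 1 => (maxElems (genAux A n).2, (genAux A n).2 \ maxElems (genAux A n).2)

/-- `gen A n = 𝒢ₙ(A)`, the `n`-th generation of `A`: maximal elements of `A` after
removal of the earlier generations. -/
def gen (A : Set (ℕ × ℕ)) (n : ℕ) : Set (ℕ × ℕ) := (genAux A n).1

/-- `𝒢ₙ(A)* = ⋃ 𝒢ₙ(A)`, the pointset of the `n`-th generation. -/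
def genStar (A : Set (ℕ × ℕ)) (n : ℕ) : Set ℝ := ⋃ I ∈ gen A n, dIco I

/-- `limsup A = ⋂ₙ 𝒢ₙ(A)*`. -/
def limsupSet (A : Set (ℕ × ℕ)) : Set ℝ := ⋂ n, genStar A n

/-- The Haar function `h_I = χ_{I⁺} − χ_{I⁻}` of the dyadic interval encoded by `p`. -/
noncomputable def haarFn (p : ℕ × ℕ) : ℝ → ℝ := fun x =>
  (Set.Ico (((p.2 : ℝ) - 1) / 2 ^ p.1)
      (((((p.2 : ℝ) - 1) / 2 ^ p.1) + ((p.2 : ℝ) / 2 ^ p.1)) / 2)).indicator 1 x -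
  (Set.Ico (((((p.2 : ℝ) - 1) / 2 ^ p.1) + ((p.2 : ℝ) / 2 ^ p.1)) / 2)
      ((p.2 : ℝ) / 2 ^ p.1)).indicator 1 x


section Aux

noncomputable def dA (p : ℕ × ℕ) : ℝ := ((p.2 : ℝ) - 1) / 2 ^ p.1
noncomputable def dB (p : ℕ × ℕ) : ℝ := (p.2 : ℝ) / 2 ^ p.1
noncomputable def dM (p : ℕ × ℕ) : ℝ := (dA p + dB p) / 2

noncomputable def leftH (p : ℕ × ℕ) : Set ℝ := Set.Ico (dA p) (dM p)
noncomputable def rightH (p : ℕ × ℕ) : Set ℝ := Set.Ico (dM p) (dB p)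

lemma dAB (p : ℕ × ℕ) : dA p < dB p := by
  have h : (0:ℝ) < 2 ^ p.1 := by positivity
  unfold dA dB
  rw [div_lt_div_iff₀ h h]
  nlinarith

lemma dAM (p : ℕ × ℕ) : dA p < dM p := by
  have := dAB p; unfold dM; linarith

lemma dMB (p : ℕ × ℕ) : dM p < dB p := by
  have := dAB p; unfold dM; linarith

lemma dIco_eq (p : ℕ × ℕ) : dIco p = Set.Ico (dA p) (dB p) := rfl

lemma haar_def (p : ℕ × ℕ) (x : ℝ) :
    haarFn p x = (leftH p).indicator 1 x - (rightH p).indicator 1 x := rfl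

lemma haar_left {p : ℕ × ℕ} {x : ℝ} (hx : x ∈ leftH p) : haarFn p x = 1 := by
  have hx' : x ∉ rightH p := by
    intro h; exact absurd hx.2 (not_lt.mpr h.1)
  rw [haar_def, Set.indicator_of_mem hx, Set.indicator_of_notMem hx']
  simp

lemma haar_right {p : ℕ × ℕ} {x : ℝ} (hx : x ∈ rightH p) : haarFn p x = -1 := by
  have hx' : x ∉ leftH p := by
    intro h; exact absurd h.2 (not_lt.mpr hx.1)
  rw [haar_def, Set.indicator_of_mem hx, Set.indicator_of_notMem hx']
  simp

lemma left_subset (p : ℕ × ℕ) : leftH p ⊆ dIco p := by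
  rw [dIco_eq]; exact Set.Ico_subset_Ico_right (dMB p).le

lemma right_subset (p : ℕ × ℕ) : rightH p ⊆ dIco p := by
  rw [dIco_eq]; exact Set.Ico_subset_Ico_left (dAM p).le

lemma dIco_union (p : ℕ × ℕ) : dIco p = leftH p ∪ rightH p := by
  rw [dIco_eq, leftH, rightH, Set.Ico_union_Ico_eq_Ico (dAM p).le (dMB p).le]

lemma haar_zero {p : ℕ × ℕ} {x : ℝ} (hx : x ∉ dIco p) : haarFn p x = 0 := by
  rw [dIco_union, Set.mem_union] at hx
  push_neg at hx
  rw [haar_def, Set.indicator_of_notMem hx.1, Set.indicator_of_notMem hx.2, sub_zero]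

lemma vol_left (p : ℕ × ℕ) : volume (leftH p) = volume (dIco p) / 2 := by
  rw [leftH, dIco_eq, Real.volume_Ico, Real.volume_Ico]
  have h : dM p - dA p = (dB p - dA p) / 2 := by unfold dM; ring
  rw [h, ENNReal.ofReal_div_of_pos two_pos]
  norm_num

lemma vol_right (p : ℕ × ℕ) : volume (rightH p) = volume (dIco p) / 2 := by
  rw [rightH, dIco_eq, Real.volume_Ico, Real.volume_Ico]
  have h : dB p - dM p = (dB p - dA p) / 2 := by unfold dM; ring
  rw [h, ENNReal.ofReal_div_of_pos two_pos]
  norm_num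

open Classical in
noncomputable def halfSet (ε : ℕ × ℕ → ℝ) (s : ℝ) (I : ℕ × ℕ) : Set ℝ :=
  if ε I = s then leftH I else rightH I

lemma halfSet_subset (ε : ℕ × ℕ → ℝ) (s : ℝ) (I : ℕ × ℕ) : halfSet ε s I ⊆ dIco I := by
  unfold halfSet; split_ifs
  · exact left_subset I
  · exact right_subset I

lemma halfSet_meas (ε : ℕ × ℕ → ℝ) (s : ℝ) (I : ℕ × ℕ) : MeasurableSet (halfSet ε s I) := by
  unfold halfSet; split_ifs <;> exact measurableSet_Ico

lemma halfSet_vol (ε : ℕ × ℕ → ℝ) (s : ℝ) (I : ℕ × ℕ) :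
    volume (halfSet ε s I) = volume (dIco I) / 2 := by
  unfold halfSet; split_ifs
  · exact vol_left I
  · exact vol_right I

lemma halfSet_union (ε : ℕ × ℕ → ℝ) (s : ℝ) (I : ℕ × ℕ)
    (hεI : ε I = 1 ∨ ε I = -1) (hs : s = 1 ∨ s = -1) :
    halfSet ε s I ∪ halfSet ε (-s) I = dIco I := by
  unfold halfSet
  rcases hεI with h | h <;> rcases hs with rfl | rfl <;>
    simp only [h, neg_neg] <;> norm_num <;>
    first
      | exact (dIco_union I).symm
      | (rw [Set.union_comm]; exact (dIco_union I).symm)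

lemma sum_single (H : Finset (ℕ × ℕ))
    (hdisj : (H : Set (ℕ × ℕ)).Pairwise fun I J => Disjoint (dIco I) (dIco J))
    (ε : ℕ × ℕ → ℝ) (I : ℕ × ℕ) (hI : I ∈ H) (x : ℝ) (hx : x ∈ dIco I) :
    ∑ J ∈ H, ε J * haarFn J x = ε I * haarFn I x := by
  refine Finset.sum_eq_single_of_mem I hI fun J hJ hne => ?_
  have hd : Disjoint (dIco J) (dIco I) := hdisj hJ hI hne
  rw [haar_zero (Set.disjoint_right.mp hd hx), mul_zero]

lemma sum_haar_eq (H : Finset (ℕ × ℕ))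
    (hdisj : (H : Set (ℕ × ℕ)).Pairwise fun I J => Disjoint (dIco I) (dIco J))
    (ε : ℕ × ℕ → ℝ) (hε : ∀ I ∈ H, ε I = 1 ∨ ε I = -1)
    (s : ℝ) (hs : s = 1 ∨ s = -1) :
    {x | ∑ I ∈ H, ε I * haarFn I x = s} = ⋃ I ∈ H, halfSet ε s I := by
  have hs0 : s ≠ 0 := by rcases hs with rfl | rfl <;> norm_num
  ext x
  simp only [Set.mem_setOf_eq, Set.mem_iUnion, exists_prop]
  constructor
  · intro hsum
    by_contra hnot
    push_neg at hnot
    by_cases hx : ∃ I ∈ H, x ∈ dIco I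
    · obtain ⟨I, hI, hxI⟩ := hx
      rw [sum_single H hdisj ε I hI x hxI] at hsum
      have hεI := hε I hI
      have hxI' : x ∈ leftH I ∪ rightH I := (dIco_union I) ▸ hxI
      rcases hxI' with hL | hR
      · rw [haar_left hL, mul_one] at hsum
        exact hnot I hI (by simp only [halfSet, if_pos hsum]; exact hL)
      · rw [haar_right hR] at hsum
        have hne : ε I ≠ s := by
          intro h; rw [h] at hsum; apply hs0; linarith
        exact hnot I hI (by simp only [halfSet, if_neg hne]; exact hR)
    · push_neg at hx
      have h0 : ∑ J ∈ H, ε J * haarFn J x = 0 :=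
        Finset.sum_eq_zero fun J hJ => by rw [haar_zero (hx J hJ), mul_zero]
      exact hs0 (by rw [← hsum, h0])
  · rintro ⟨I, hI, hxI⟩
    have hxd : x ∈ dIco I := halfSet_subset ε s I hxI
    rw [sum_single H hdisj ε I hI x hxd]
    have hεI := hε I hI
    by_cases h : ε I = s
    · have hL : x ∈ leftH I := by simpa only [halfSet, if_pos h] using hxI
      rw [haar_left hL, mul_one, h]
    · have hR : x ∈ rightH I := by simpa only [halfSet, if_neg h] using hxI
      rw [haar_right hR]
      rcases hεI with h1 | h1 <;> rcases hs with rfl | rfl <;>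
        first | (exfalso; exact h h1) | (rw [h1]; ring)

lemma vol_biUnion (H : Finset (ℕ × ℕ))
    (hdisj : (H : Set (ℕ × ℕ)).Pairwise fun I J => Disjoint (dIco I) (dIco J))
    (ε : ℕ × ℕ → ℝ) (s : ℝ) :
    volume (⋃ I ∈ H, halfSet ε s I) = volume (⋃ I ∈ H, dIco I) / 2 := by
  rw [measure_biUnion_finset
        (fun I hI J hJ hne => (hdisj hI hJ hne).mono (halfSet_subset ε s I) (halfSet_subset ε s J))
        (fun I _ => halfSet_meas ε s I),
      measure_biUnion_finset hdisj (fun I _ => measurableSet_Ico)]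
  simp only [halfSet_vol, div_eq_mul_inv, ← Finset.sum_mul]

end Aux

/-- Let `H ⊆ 𝒢ₙ(A)` be finite, nonempty, with pairwise disjoint intervals, and suppose
`|H* ∩ limsup A| > (1−κ)|H*|` with `κ ∈ (0, 1/2)`.  Then for any signs `ε̄ ∈ {−1,1}^H`,
each of the sets `C = H*_{ε̄} = {∑ ε_I h_I = 1}` and `C = H*_{−ε̄} = {∑ ε_I h_I = −1}`
satisfies `|H*|/2 ≥ |C ∩ limsup A| > (1−2κ)|C| = (1−2κ)|H*|/2`. -/
theorem stmt_12 (A : Set (ℕ × ℕ)) (hA : A ⊆ DIdx) (n : ℕ)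
    (κ : ℝ) (hκ : κ ∈ Set.Ioo (0 : ℝ) (1 / 2))
    (H : Finset (ℕ × ℕ)) (hne : H.Nonempty) (hsub : ↑H ⊆ gen A n)
    (hdisj : (H : Set (ℕ × ℕ)).Pairwise fun I J => Disjoint (dIco I) (dIco J))
    (ε : ℕ × ℕ → ℝ) (hε : ∀ I ∈ H, ε I = 1 ∨ ε I = -1)
    (Hstar : Set ℝ) (hHstar : Hstar = ⋃ I ∈ H, dIco I)
    (hbig : ENNReal.ofReal (1 - κ) * volume Hstar < volume (Hstar ∩ limsupSet A)) :
    ∀ s : ℝ, s = 1 ∨ s = -1 →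
      volume ({x | ∑ I ∈ H, ε I * haarFn I x = s} ∩ limsupSet A) ≤ volume Hstar / 2 ∧
      ENNReal.ofReal (1 - 2 * κ) * (volume Hstar / 2) <
        volume ({x | ∑ I ∈ H, ε I * haarFn I x = s} ∩ limsupSet A) ∧
      volume {x | ∑ I ∈ H, ε I * haarFn I x = s} = volume Hstar / 2 := by
  intro s hs
  classical
  have hs0 : s ≠ 0 := by rcases hs with rfl | rfl <;> norm_num
  have hs' : -s = 1 ∨ -s = -1 := by rcases hs with rfl | rfl <;> norm_num
  have hCs := sum_haar_eq H hdisj ε hε s hs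
  have hCs' := sum_haar_eq H hdisj ε hε (-s) hs'
  have hmeas : ∀ t : ℝ, MeasurableSet (⋃ I ∈ H, halfSet ε t I) :=
    fun t => H.measurableSet_biUnion (fun I _ => halfSet_meas ε t I)
  have hvol : ∀ t, t = 1 ∨ t = -1 →
      volume {x | ∑ I ∈ H, ε I * haarFn I x = t} = volume Hstar / 2 := by
    intro t ht
    rw [sum_haar_eq H hdisj ε hε t ht, hHstar]
    exact vol_biUnion H hdisj ε t
  have hL : MeasurableSet (limsupSet A) := by
    refine MeasurableSet.iInter fun m => ?_
    exact MeasurableSet.biUnion (Set.to_countable _) (fun I _ => measurableSet_Ico)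
  have hfin : volume Hstar ≠ ⊤ := by
    rw [hHstar]
    refine ne_top_of_le_ne_top ?_ (measure_biUnion_finset_le H dIco)
    refine (ENNReal.sum_lt_top.mpr fun I _ => ?_).ne
    rw [dIco_eq, Real.volume_Ico]
    exact ENNReal.ofReal_lt_top
  have part1 : ∀ t, t = 1 ∨ t = -1 →
      volume ({x | ∑ I ∈ H, ε I * haarFn I x = t} ∩ limsupSet A) ≤ volume Hstar / 2 := by
    intro t ht
    calc volume ({x | ∑ I ∈ H, ε I * haarFn I x = t} ∩ limsupSet A)
        ≤ volume {x | ∑ I ∈ H, ε I * haarFn I x = t} := measure_mono Set.inter_subset_left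
      _ = volume Hstar / 2 := hvol t ht
  refine ⟨part1 s hs, ?_, hvol s hs⟩
  -- decomposition of Hstar
  have hU : Hstar = {x | ∑ I ∈ H, ε I * haarFn I x = s} ∪
      {x | ∑ I ∈ H, ε I * haarFn I x = -s} := by
    rw [hHstar, hCs, hCs']
    ext x
    simp only [Set.mem_iUnion, Set.mem_union, exists_prop]
    constructor
    · rintro ⟨I, hI, hx⟩
      rw [← halfSet_union ε s I (hε I hI) hs, Set.mem_union] at hx
      rcases hx with h | h
      · exact Or.inl ⟨I, hI, h⟩
      · exact Or.inr ⟨I, hI, h⟩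
    · rintro (⟨I, hI, hx⟩ | ⟨I, hI, hx⟩)
      · exact ⟨I, hI, halfSet_subset ε s I hx⟩
      · exact ⟨I, hI, halfSet_subset ε (-s) I hx⟩
  have hdisjC : Disjoint ({x | ∑ I ∈ H, ε I * haarFn I x = s} ∩ limsupSet A)
      ({x | ∑ I ∈ H, ε I * haarFn I x = -s} ∩ limsupSet A) := by
    rw [Set.disjoint_left]
    rintro x ⟨hx1, -⟩ ⟨hx2, -⟩
    rw [Set.mem_setOf_eq] at hx1 hx2
    apply hs0
    rw [hx1] at hx2
    linarith
  have hab : volume (Hstar ∩ limsupSet A) =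
      volume ({x | ∑ I ∈ H, ε I * haarFn I x = s} ∩ limsupSet A) +
      volume ({x | ∑ I ∈ H, ε I * haarFn I x = -s} ∩ limsupSet A) := by
    rw [hU, Set.union_inter_distrib_right]
    exact measure_union hdisjC ((hCs' ▸ hmeas (-s)).inter hL)
  set V := volume Hstar with hV
  set a := volume ({x | ∑ I ∈ H, ε I * haarFn I x = s} ∩ limsupSet A) with ha
  set b := volume ({x | ∑ I ∈ H, ε I * haarFn I x = -s} ∩ limsupSet A) with hb
  have hbV : b ≤ V / 2 := part1 (-s) hs'
  have hbfin : b ≠ ⊤ := by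
    refine ne_top_of_le_ne_top ?_ hbV
    exact (ENNReal.div_lt_top hfin (by norm_num)).ne
  rw [← ENNReal.add_lt_add_iff_right hbfin]
  have halg : ENNReal.ofReal (1 - 2 * κ) * (V / 2) + V / 2 = ENNReal.ofReal (1 - κ) * V := by
    have h1 : (0:ℝ) ≤ 1 - 2 * κ := by linarith [hκ.2]
    have h2 : ENNReal.ofReal (1 - 2 * κ) + 1 = ENNReal.ofReal (2 * (1 - κ)) := by
      rw [← ENNReal.ofReal_one, ← ENNReal.ofReal_add h1 zero_le_one]
      ring_nf
    have h3 : (2 : ENNReal) * (V / 2) = V :=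
      ENNReal.mul_div_cancel' (by norm_num) (by norm_num)
    calc ENNReal.ofReal (1 - 2 * κ) * (V / 2) + V / 2
        = (ENNReal.ofReal (1 - 2 * κ) + 1) * (V / 2) := by rw [add_mul, one_mul]
      _ = ENNReal.ofReal (2 * (1 - κ)) * (V / 2) := by rw [h2]
      _ = ENNReal.ofReal 2 * ENNReal.ofReal (1 - κ) * (V / 2) := by
          rw [ENNReal.ofReal_mul (by norm_num)]
      _ = ENNReal.ofReal (1 - κ) * (2 * (V / 2)) := by
          rw [show ENNReal.ofReal 2 = (2 : ENNReal) by norm_num]; ring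
      _ = ENNReal.ofReal (1 - κ) * V := by rw [h3]
  calc ENNReal.ofReal (1 - 2 * κ) * (V / 2) + b
      ≤ ENNReal.ofReal (1 - 2 * κ) * (V / 2) + V / 2 := add_le_add_right hbV _
    _ = ENNReal.ofReal (1 - κ) * V := halg
    _ < volume (Hstar ∩ limsupSet A) := hbig
    _ = a + b := hab
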